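/- With the paired exponential utility U, X ∈ (L^∞)ᴺ, S = ∑ⱼ Xʲ, β = ∑ⱼ 1/αⱼ, B < N²/2, d := (β/2)log((β²/(N²-2B)) E[exp(-2S/β)]), and Ŷⁿ := -Xⁿ + (1/(βαₙ))(S + d) - (1/αₙ)log(1/αₙ), the budget constraint is saturated: E[U(X + Ŷ)] = B. -/

import Mathlib

open Real Finset MeasureTheory

theorem paired_exp_primal_budget_saturated {Ω : Type*} [MeasurableSpace Ω]
    (μ : Measure Ω) [IsProbabilityMeasure μ]
    (N : ℕ) (hN : 1 ≤ N)
    (α : Fin N → ℝ) (hα : ∀ n, 0 < α n)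
    (U : (Fin N → ℝ) → ℝ)
    (hU : ∀ x, U x = (N : ℝ)^2 / 2 - (1/2) * (∑ n, exp (-(α n * x n)))^2)
    (β : ℝ) (hβ : β = ∑ j, 1 / α j)
    (B : ℝ) (hB : B < (N : ℝ)^2 / 2)
    (X : Ω → Fin N → ℝ) (hXm : Measurable X)
    (C : ℝ) (hXb : ∀ ω n, |X ω n| ≤ C)
    (S : Ω → ℝ) (hS : ∀ ω, S ω = ∑ j, X ω j)
    (d : ℝ)
    (hd : d = (β / 2) * log ((β^2 / ((N : ℝ)^2 - 2 * B)) *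
      ∫ ω, exp (-(2 * S ω) / β) ∂μ))
    (Y : Ω → Fin N → ℝ)
    (hY : ∀ ω n, Y ω n = -X ω n + (1 / (β * α n)) * (S ω + d)
      - (1 / α n) * log (1 / α n)) :
    ∫ ω, U (fun n => X ω n + Y ω n) ∂μ = B := by
  have hNe : Nonempty (Fin N) := Fin.pos_iff_nonempty.mp hN
  have hβpos : 0 < β := by
    rw [hβ]
    exact Finset.sum_pos (fun j _ => div_pos one_pos (hα j)) Finset.univ_nonempty
  have hSm : Measurable S := by
    have : S = fun ω => ∑ j, X ω j := funext hS
    rw [this]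
    exact Finset.measurable_sum _ (fun j _ => (measurable_pi_apply j).comp hXm)
  have hSb : ∀ ω, |S ω| ≤ N * C := by
    intro ω
    rw [hS]
    calc |∑ j, X ω j| ≤ ∑ j, |X ω j| := Finset.abs_sum_le_sum_abs _ _
      _ ≤ ∑ _j : Fin N, C := Finset.sum_le_sum (fun j _ => hXb ω j)
      _ = N * C := by simp [mul_comm]
  have hgm : Measurable fun ω => exp (-(2 * S ω) / β) :=
    (((measurable_const.mul hSm).neg).div_const β).exp
  have hgint : Integrable (fun ω => exp (-(2 * S ω) / β)) μ := by
    refine ⟨hgm.aestronglyMeasurable, ?_⟩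
    apply MeasureTheory.HasFiniteIntegral.of_bounded
      (C := exp (2 * (N * C) / β))
    filter_upwards with ω
    rw [Real.norm_eq_abs, abs_of_pos (exp_pos _)]
    apply exp_le_exp.mpr
    have := (abs_le.mp (hSb ω)).1
    apply div_le_div_of_nonneg_right ?_ hβpos.le |>.trans_eq rfl
    linarith
  set I := ∫ ω, exp (-(2 * S ω) / β) ∂μ with hI
  have hIpos : 0 < I := by
    have : (0:ℝ) < exp (-(2 * (N * C)) / β) * (μ Set.univ).toReal := by
      simp [measure_univ, exp_pos]
    calc (0:ℝ) < ∫ _ω, exp (-(2 * (N * C)) / β) ∂μ := by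
          rw [integral_const]; simpa [measure_univ] using this
      _ ≤ I := by
          apply integral_mono (integrable_const _) hgint
          intro ω
          apply exp_le_exp.mpr
          have := (abs_le.mp (hSb ω)).2
          apply div_le_div_of_nonneg_right ?_ hβpos.le
          linarith
  have hNB : 0 < (N:ℝ)^2 - 2 * B := by linarith
  have hKI : 0 < β^2 / ((N : ℝ)^2 - 2 * B) * I := mul_pos (div_pos (by positivity) hNB) hIpos
  have key : ∀ ω, U (fun n => X ω n + Y ω n)
      = (N:ℝ)^2/2 - (1/2 * (β^2 * exp (-(2*d)/β))) * exp (-(2 * S ω) / β) := by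
    intro ω
    rw [hU]
    have hsum : ∑ n, exp (-(α n * (X ω n + Y ω n))) = exp (-((S ω + d)/β)) * β := by
      have hterm : ∀ n, exp (-(α n * (X ω n + Y ω n)))
          = exp (-((S ω + d)/β)) * (1 / α n) := by
        intro n
        rw [hY]
        have hαn : α n ≠ 0 := (hα n).ne'
        have harg : α n * (X ω n + (-X ω n + (1 / (β * α n)) * (S ω + d)
            - (1 / α n) * log (1 / α n)))
            = (S ω + d)/β - log (1/α n) := by
          field_simp
          ring
        rw [harg, neg_sub, exp_sub, exp_log (div_pos one_pos (hα n)), exp_neg]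
        ring
      rw [Finset.sum_congr rfl (fun n _ => hterm n), ← Finset.mul_sum, ← hβ]
    rw [hsum]
    have h2 : exp (-((S ω + d)/β)) ^ 2 = exp (-(2*d)/β) * exp (-(2 * S ω)/β) := by
      rw [sq, ← exp_add, ← exp_add]
      congr 1
      field_simp
      ring
    rw [mul_pow, h2]
    ring
  have hrw : (fun ω => U fun n => X ω n + Y ω n)
      = fun ω => (N:ℝ)^2/2 - (1/2 * (β^2 * exp (-(2*d)/β))) * exp (-(2 * S ω) / β) :=
    funext key
  rw [hrw, integral_sub (integrable_const _) (hgint.const_mul _),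
    integral_const, integral_const_mul, probReal_univ]
  have hexp : exp (-(2*d)/β) = (β^2 / ((N : ℝ)^2 - 2 * B) * I)⁻¹ := by
    have : -(2*d)/β = -log (β^2 / ((N : ℝ)^2 - 2 * B) * I) := by
      rw [hd]; field_simp
    rw [this, exp_neg, exp_log hKI]
  rw [hexp, ← hI]
  have hβ2 : β^2 ≠ 0 := by positivity
  field_simp
  ring
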